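/- arXiv:1305.5266 — 5 statements merged into one kernel-verified Lean document; each statement's English description precedes it below -/
import Mathlib

section
/- If a correct decomposition ℬ of a starting box B₀ with respect to points z¹,…,z^{s-1} is updated by applying a full m-split with respect to a new point z^s to every box of ℬ containing z^s, then the resulting collection is a correct decomposition with respect to z¹,…,z^s. -/
/-- Correctness of the full `m`-split: if a correct decomposition (given by the
finite set `ℬ` of upper bounds of boxes with common lower bound `l`, inside the
starting box `B₀ = {z : l ≤ z < u}`) with respect to the points of `P` is updated
by applying a full `m`-split with respect to a new point `zs ∈ B₀` to every box of
`ℬ` containing `zs`, then the resulting collection is a correct decomposition with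
respect to `P ∪ {zs}`. -/
theorem stmt_3 {m : ℕ} [DecidableEq (Fin m → ℝ)] (l u zs : Fin m → ℝ)
    (ℬ P : Finset (Fin m → ℝ))
    (hcorrect :
      {z : Fin m → ℝ | ∀ i, l i ≤ z i ∧ z i < u i} \
          (⋃ b ∈ ℬ, {z : Fin m → ℝ | ∀ i, l i ≤ z i ∧ z i < b i}) =
        ⋃ p ∈ P, {z : Fin m → ℝ | (∀ i, l i ≤ z i ∧ z i < u i) ∧ ∀ i, p i ≤ z i})
    (hzs : ∀ i, l i ≤ zs i ∧ zs i < u i) :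
    {z : Fin m → ℝ | ∀ i, l i ≤ z i ∧ z i < u i} \
        ((⋃ b ∈ ℬ.filter (fun b => ¬ ∀ i, zs i < b i),
            {z : Fin m → ℝ | ∀ i, l i ≤ z i ∧ z i < b i}) ∪
          (⋃ b ∈ ℬ.filter (fun b => ∀ i, zs i < b i), ⋃ i : Fin m,
            {z : Fin m → ℝ | (∀ t, l t ≤ z t ∧ z t < b t) ∧ z i < zs i})) =
      ⋃ p ∈ insert zs P,
        {z : Fin m → ℝ | (∀ i, l i ≤ z i ∧ z i < u i) ∧ ∀ i, p i ≤ z i} := by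
  have hc := Set.ext_iff.mp hcorrect
  ext z
  have hc' := hc z
  simp only [Set.mem_diff, Set.mem_setOf_eq, Set.mem_iUnion, Set.mem_union,
    Finset.mem_filter, Finset.mem_insert, exists_prop] at hc' ⊢
  constructor
  · rintro ⟨hB, hnot⟩
    have h1 : ¬ ∃ b, (b ∈ ℬ ∧ ¬ ∀ i, zs i < b i) ∧ ∀ i, l i ≤ z i ∧ z i < b i :=
      fun h => hnot (Or.inl h)
    have h2 : ¬ ∃ b, (b ∈ ℬ ∧ ∀ i, zs i < b i) ∧
        ∃ i, (∀ t, l t ≤ z t ∧ z t < b t) ∧ z i < zs i :=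
      fun h => hnot (Or.inr h)
    by_cases hge : ∀ i, zs i ≤ z i
    · exact ⟨zs, Or.inl rfl, hB, hge⟩
    · push_neg at hge
      obtain ⟨i, hi⟩ := hge
      have hold : ¬ ∃ b ∈ ℬ, ∀ j, l j ≤ z j ∧ z j < b j := by
        rintro ⟨b, hb, hzb⟩
        by_cases hzsb : ∀ j, zs j < b j
        · exact h2 ⟨b, ⟨hb, hzsb⟩, i, hzb, hi⟩
        · exact h1 ⟨b, ⟨hb, hzsb⟩, hzb⟩
      obtain ⟨p, hp, hzp⟩ := hc'.mp ⟨hB, fun h => hold (by simpa using h)⟩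
      exact ⟨p, Or.inr hp, hzp⟩
  · rintro ⟨p, hp | hp, hB, hzp⟩
    · subst hp
      refine ⟨hB, ?_⟩
      rintro (⟨b, ⟨hb, hnb⟩, hzb⟩ | ⟨b, ⟨hb, hnb⟩, i, hzb, hi⟩)
      · refine hnb fun j => ?_
        by_contra hj
        exact absurd (hzb j).2 (not_lt.mpr (le_trans (not_lt.mp hj) (hzp j)))
      · exact absurd hi (not_lt.mpr (hzp i))
    · have hd := hc'.mpr ⟨p, hp, hB, hzp⟩
      refine ⟨hB, ?_⟩
      have hold : ¬ ∃ b ∈ ℬ, ∀ j, l j ≤ z j ∧ z j < b j := by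
        intro h
        exact hd.2 (by simpa using h)
      rintro (⟨b, ⟨hb, _⟩, hzb⟩ | ⟨b, ⟨hb, _⟩, i, hzb, _⟩)
      · exact hold ⟨b, hb, hzb⟩
      · exact hold ⟨b, hb, hzb⟩
end

section
/- Let B̂ be a box not containing z^s in a non-redundant decomposition where all previously generated points differ pairwise from z^s in every component. Then B̂ does not dominate any box Bᵢ obtained by splitting a box B containing z^s with respect to component i, and no such Bᵢ dominates B̂. -/
/-- Let `uB'` be (the upper bound of) a box of a non-redundant decomposition `ℬ`
not containing `zs` (some component of `zs` is `≥` the corresponding bound), where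
`zs` differs from every bound of `uB'` in every component.  Then `uB'` neither
dominates nor is dominated by any box `Bᵢ` obtained by splitting a box `uB ∈ ℬ`
containing `zs` with respect to a component `i`. -/
theorem stmt_6 {m : ℕ} (ℬ : Finset (Fin m → ℝ))
    (hnonred : ∀ a ∈ ℬ, ∀ b ∈ ℬ, a ≠ b → ¬ a ≤ b)
    (zs uB uB' : Fin m → ℝ) (hB : uB ∈ ℬ) (hB' : uB' ∈ ℬ)
    (hout : ∃ j, uB' j ≤ zs j) (hneq : ∀ j, zs j ≠ uB' j)
    (hin : ∀ j, zs j < uB j) (i : Fin m) :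
    ¬ uB' ≤ Function.update uB i (zs i) ∧
    ¬ Function.update uB i (zs i) ≤ uB' := by
  obtain ⟨j, hj⟩ := hout
  have hne : uB' ≠ uB := by
    intro h
    exact absurd (h ▸ hj) (not_le.mpr (hin j))
  constructor
  · intro hle
    apply hnonred uB' hB' uB hB hne
    intro k
    refine (hle k).trans ?_
    by_cases hk : k = i
    · subst hk; rw [Function.update_self]; exact (hin k).le
    · simp [Function.update_of_ne hk]
  · intro hle
    by_cases hji : j = i
    · subst hji
      have := hle j
      rw [Function.update_self] at this
      exact hneq j (le_antisymm this hj)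
    · have := hle j
      rw [Function.update_of_ne hji] at this
      exact absurd this (not_le.mpr (lt_of_le_of_lt hj (hin j)))
end

section
/- If exactly one box B of a non-redundant decomposition is split with respect to all m components by a new point z^s with z^s < u(B) (componentwise), and z^sⱼ ≠ u(B')ⱼ for every other box B' and every component j, then the m resulting boxes Bᵢ together with the unchanged boxes form a non-redundant collection. -/
/-- If exactly one box `uB` of a non-redundant decomposition `ℬ` is split with
respect to all `m` components by a new point `zs < u(B)`, where `zs` differs in
every component from the bounds of every other box, then the `m` resulting boxes
together with the unchanged boxes form a non-redundant collection. -/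
theorem stmt_7 {m : ℕ} [DecidableEq (Fin m → ℝ)] (ℬ : Finset (Fin m → ℝ))
    (hnonred : ∀ a ∈ ℬ, ∀ b ∈ ℬ, a ≠ b → ¬ a ≤ b)
    (zs uB : Fin m → ℝ) (hB : uB ∈ ℬ) (hin : ∀ t, zs t < uB t)
    (hunique : ∀ b ∈ ℬ, b ≠ uB → ∃ j, b j ≤ zs j)
    (hneq : ∀ b ∈ ℬ, b ≠ uB → ∀ j, b j ≠ zs j) :
    ∀ a ∈ (ℬ.erase uB) ∪
        Finset.image (fun i => Function.update uB i (zs i)) Finset.univ,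
      ∀ b ∈ (ℬ.erase uB) ∪
        Finset.image (fun i => Function.update uB i (zs i)) Finset.univ,
      a ≠ b → ¬ a ≤ b := by
  intro a ha b hb hab hle
  simp only [Finset.mem_union, Finset.mem_image, Finset.mem_univ, true_and,
    Finset.mem_erase] at ha hb
  rcases ha with ⟨haB, haℬ⟩ | ⟨i, rfl⟩
  · rcases hb with ⟨hbB, hbℬ⟩ | ⟨i, rfl⟩
    · exact hnonred a haℬ b hbℬ hab hle
    · have hle2 : a ≤ uB := le_trans hle (by
        intro t
        by_cases h : t = i
        · subst h; rw [Function.update_self]; exact (hin t).le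
        · rw [Function.update_of_ne h])
      exact hnonred a haℬ uB hB haB hle2
  · rcases hb with ⟨hbB, hbℬ⟩ | ⟨i', rfl⟩
    · obtain ⟨j, hj⟩ := hunique b hbℬ hbB
      have hj' : b j < zs j := lt_of_le_of_ne hj (hneq b hbℬ hbB j)
      have hlj := hle j
      by_cases h : j = i
      · subst h; rw [Function.update_self] at hlj; linarith
      · rw [Function.update_of_ne h] at hlj; linarith [hin j]
    · have hii : i ≠ i' := fun h => hab (by rw [h])
      have hli := hle i'
      rw [Function.update_of_ne (Ne.symm hii), Function.update_self] at hli
      exact absurd hli (not_le.mpr (hin i'))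
end

section
/- In the graph on the boxes containing z^s where each d-box (box split with respect to exactly d ∈ {0,1,2} of the 3 components) has exactly 3 − d neighbors also containing z^s, if three distinct 2-boxes are present then at least one 0-box must be present. -/
lemma even_sum_filter_adj {α : Type*} [DecidableEq α] (G : SimpleGraph α)
    [DecidableRel G.Adj] (S : Finset α) :
    Even (∑ b ∈ S, (S.filter (G.Adj b)).card) := by
  classical
  let G' : SimpleGraph {x // x ∈ S} := G.comap Subtype.val
  haveI : DecidableRel G'.Adj := fun x y => by
    unfold G'; simp [SimpleGraph.comap]; infer_instance
  have hdeg : ∀ v : {x // x ∈ S}, G'.degree v = (S.filter (G.Adj v.1)).card := by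
    intro v
    rw [SimpleGraph.degree]
    apply Finset.card_bij (fun w _ => w.1)
    · intro w hw
      rw [SimpleGraph.mem_neighborFinset] at hw
      simp [SimpleGraph.mem_neighborFinset, G', SimpleGraph.comap] at hw ⊢
      exact hw
    · intro w1 _ w2 _ h; exact Subtype.ext h
    · intro x hx
      simp at hx
      exact ⟨⟨x, hx.1⟩, by rw [SimpleGraph.neighborFinset, Set.mem_toFinset]; exact hx.2, rfl⟩
  have h2m := SimpleGraph.sum_degrees_eq_twice_card_edges G'
  have h2 : ∑ b ∈ S, (S.filter (G.Adj b)).card = ∑ v : {x // x ∈ S}, G'.degree v := by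
    rw [← Finset.sum_coe_sort S (fun b => (S.filter (G.Adj b)).card)]
    exact Finset.sum_congr rfl fun v _ => (hdeg v).symm
  rw [h2, h2m]
  exact even_two_mul _

/-- In the graph on the boxes containing `zs` in which each `d`-box (split with
respect to exactly `d` of the 3 components) has exactly `3 − d` neighbors also
containing `zs`, if three distinct `2`-boxes (with pairwise distinct split sets)
are present and no box is split with respect to more than two components, then at
least one `0`-box must be present. -/
theorem stmt_12 {α : Type*} [DecidableEq α] (G : SimpleGraph α) [DecidableRel G.Adj]
    (S : Finset α) (J : α → Finset (Fin 3))
    (hdeg : ∀ b ∈ S, (S.filter (G.Adj b)).card = 3 - (J b).card)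
    (hle : ∀ b ∈ S, (J b).card ≤ 2)
    (hdiff : ∀ b ∈ S, ∀ b' ∈ S, b ≠ b' → (J b).card = 2 → (J b').card = 2 → J b ≠ J b')
    (a b c : α) (ha : a ∈ S) (hb : b ∈ S) (hc : c ∈ S)
    (hab : a ≠ b) (hac : a ≠ c) (hbc : b ≠ c)
    (h2a : (J a).card = 2) (h2b : (J b).card = 2) (h2c : (J c).card = 2) :
    ∃ d ∈ S, (J d).card = 0 := by
  classical
  by_contra h0
  push_neg at h0
  have heven : Even (∑ x ∈ S, (3 - (J x).card)) := by
    rw [← Finset.sum_congr rfl hdeg]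
    exact even_sum_filter_adj G S
  -- the set of 2-boxes is exactly {a, b, c}
  have hT : S.filter (fun x => (J x).card = 2) = {a, b, c} := by
    apply Finset.Subset.antisymm
    · intro d hd
      rw [Finset.mem_filter] at hd
      obtain ⟨hdS, hd2⟩ := hd
      -- J d ∈ {J a, J b, J c} since all 2-subsets of Fin 3 are covered
      have hP : ({J a, J b, J c} : Finset (Finset (Fin 3))) =
          (Finset.univ : Finset (Fin 3)).powerset.filter (fun s => s.card = 2) := by
        apply Finset.eq_of_subset_of_card_le
        · intro s hs
          simp only [Finset.mem_insert, Finset.mem_singleton] at hs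
          rcases hs with rfl | rfl | rfl <;>
            simp [Finset.mem_filter, Finset.mem_powerset, *]
        · have hcard : ({J a, J b, J c} : Finset (Finset (Fin 3))).card = 3 := by
            rw [Finset.card_insert_of_notMem, Finset.card_insert_of_notMem,
              Finset.card_singleton]
            · simp only [Finset.mem_singleton]
              exact hdiff b hb c hc hbc h2b h2c
            · simp only [Finset.mem_insert, Finset.mem_singleton]
              push_neg
              exact ⟨hdiff a ha b hb hab h2a h2b, hdiff a ha c hc hac h2a h2c⟩
          rw [hcard]
          decide
      have hJd : J d ∈ ({J a, J b, J c} : Finset (Finset (Fin 3))) := by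
        rw [hP]
        simp [Finset.mem_filter, Finset.mem_powerset, hd2]
      simp only [Finset.mem_insert, Finset.mem_singleton] at hJd
      simp only [Finset.mem_insert, Finset.mem_singleton]
      rcases hJd with h | h | h
      · left; by_contra hne; exact hdiff d hdS a ha hne hd2 h2a h
      · right; left; by_contra hne; exact hdiff d hdS b hb hne hd2 h2b h
      · right; right; by_contra hne; exact hdiff d hdS c hc hne hd2 h2c h
    · intro d hd
      simp only [Finset.mem_insert, Finset.mem_singleton] at hd
      rcases hd with rfl | rfl | rfl <;> simp [Finset.mem_filter, *]
  have hsplit := Finset.sum_filter_add_sum_filter_not S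
    (fun x => (J x).card = 2) (fun x => 3 - (J x).card)
  have hs1 : ∑ x ∈ S.filter (fun x => (J x).card = 2), (3 - (J x).card) = 3 := by
    rw [hT]
    rw [Finset.sum_insert (by simp [hab, hac]), Finset.sum_insert (by simp [hbc]),
      Finset.sum_singleton, h2a, h2b, h2c]
    norm_num
  have hs2 : ∑ x ∈ S.filter (fun x => ¬ (J x).card = 2), (3 - (J x).card) =
      2 * (S.filter (fun x => ¬ (J x).card = 2)).card := by
    rw [Finset.sum_congr rfl (fun x hx => ?_), Finset.sum_const, smul_eq_mul, mul_comm]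
    rw [Finset.mem_filter] at hx
    have h1 : (J x).card = 1 := by
      have := hle x hx.1
      have := h0 x hx.1
      omega
    rw [h1]
  rw [← hsplit, hs1, hs2] at heven
  obtain ⟨k, hk⟩ := heven
  omega
end

section
/- Suppose B, B̃ are distinct boxes of a non-redundant decomposition, both containing z^s, both split with respect to the two components i and j (i ≠ j), producing boxes with upper bounds agreeing with the parent except equal to z^s in the split component. Then the constraint structure forces a contradiction unless at most three boxes in the decomposition are split with respect to exactly two components and their pairs of split components are pairwise distinct; in particular, no two boxes containing z^s can be split with respect to the same pair {i, j} of components. -/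
/-- In the `v`-split setting for `m = 3` with the unique-neighbor structure:
no two distinct boxes of the non-redundant decomposition, both containing `zs`,
can be split with respect to the same pair `{i, j}` of components. -/
theorem stmt_18 (l : Fin 3 → ℝ) (ℬ : Finset (Fin 3 → ℝ))
    (v : (Fin 3 → ℝ) → Fin 3 → ℝ) (zs : Fin 3 → ℝ)
    (hnonred : ∀ a ∈ ℬ, ∀ b ∈ ℬ, a ≠ b → ¬ a ≤ b)
    (hnb : ∀ ub ∈ ℬ, ∀ t : Fin 3, (∃ w ∈ ℬ, w t < ub t) →
      ∃ w ∈ ℬ, w t = v ub t ∧ w t < ub t ∧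
        (∃ j, j ≠ t ∧ ub j < w j ∧ ∀ k, k ≠ t → k ≠ j → w k = ub k) ∧
        (∀ w' ∈ ℬ, w' t < ub t → w' t ≤ w t))
    (hvl : ∀ ub ∈ ℬ, ∀ t : Fin 3, (¬ ∃ w ∈ ℬ, w t < ub t) → v ub t = l t)
    (hpair : ∀ b ∈ ℬ, ∀ b' ∈ ℬ, b ≠ b' → ∃ t, b' t ≤ v b t)
    (B B' : Fin 3 → ℝ) (hB : B ∈ ℬ) (hB' : B' ∈ ℬ) (hBB' : B ≠ B')
    (hzB : ∀ t, zs t < B t) (hzB' : ∀ t, zs t < B' t)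
    (i j : Fin 3) (hij : i ≠ j)
    (hsi : v B i ≤ zs i) (hsj : v B j ≤ zs j) :
    ¬ (v B' i ≤ zs i ∧ v B' j ≤ zs j) := by
  rintro ⟨hsi', hsj'⟩
  -- Key: if `C` is split w.r.t. `t` and `C'` contains `zs` in component `t`,
  -- then `C' t < C t` is impossible (by maximality of the neighbor's value).
  have key : ∀ C ∈ ℬ, ∀ C' ∈ ℬ, ∀ t : Fin 3,
      v C t ≤ zs t → zs t < C' t → ¬ C' t < C t := by
    intro C hC C' hC' t hv hz hlt
    obtain ⟨w, hw, hwt, -, -, hmax⟩ := hnb C hC t ⟨C', hC', hlt⟩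
    have h1 : C' t ≤ w t := hmax C' hC' hlt
    have h2 : w t ≤ zs t := hwt ▸ hv
    linarith
  have hi : B i = B' i :=
    le_antisymm (not_lt.1 (key B hB B' hB' i hsi (hzB' i)))
      (not_lt.1 (key B' hB' B hB i hsi' (hzB i)))
  have hj : B j = B' j :=
    le_antisymm (not_lt.1 (key B hB B' hB' j hsj (hzB' j)))
      (not_lt.1 (key B' hB' B hB j hsj' (hzB j)))
  have hex : ∀ a b : Fin 3, a ≠ b → ∃ c : Fin 3, c ≠ a ∧ c ≠ b := by decide
  obtain ⟨k, hki, hkj⟩ := hex i j hij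
  have huniq' : ∀ a b c t : Fin 3, a ≠ b → c ≠ a → c ≠ b → t ≠ a → t ≠ b → t = c := by decide
  have huniq : ∀ t : Fin 3, t ≠ i → t ≠ j → t = k := fun t h1 h2 =>
    huniq' i j k t hij hki hkj h1 h2
  have hcov : ∀ t : Fin 3, t = i ∨ t = j ∨ t = k := by
    intro t
    by_cases h1 : t = i
    · exact Or.inl h1
    by_cases h2 : t = j
    · exact Or.inr (Or.inl h2)
    · exact Or.inr (Or.inr (huniq t h1 h2))
  rcases le_total (B k) (B' k) with hk | hk
  · refine hnonred B hB B' hB' hBB' (fun t => ?_)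
    rcases hcov t with rfl | rfl | rfl
    · exact hi.le
    · exact hj.le
    · exact hk
  · refine hnonred B' hB' B hB (Ne.symm hBB') (fun t => ?_)
    rcases hcov t with rfl | rfl | rfl
    · exact hi.ge
    · exact hj.ge
    · exact hk
end
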